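/- A tree $T$ is skew-nontrivial (i.e., applying the skew forcing rule starting from the empty set produces a proper 2-coloring, equivalently no removed vertices/edges in constructing the skew-nontrivial subgraph) if and only if the distance between every pair of leaves of $T$ is even. -/

import Mathlib

open SimpleGraph

variable {V : Type*}

/-- A skew fort: a nonempty vertex set `F` such that no vertex of the graph
has exactly one neighbor in `F`. -/
def SkewFort (G : SimpleGraph V) (F : Set V) : Prop :=
  F.Nonempty ∧ ∀ v : V, (G.neighborSet v ∩ F).ncard ≠ 1

/-- The vertices eventually forced blue by the skew color change rule starting
from the set `S` of initially blue vertices: a vertex `v` is forced if some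
vertex `u` has `v` as its unique non-blue neighbor. -/
inductive SkewForced (G : SimpleGraph V) (S : Set V) : V → Prop
  | mem : ∀ {v}, v ∈ S → SkewForced G S v
  | force : ∀ {u v}, G.Adj u v → (∀ w, G.Adj u w → w ≠ v → SkewForced G S w) →
      SkewForced G S v

/-- The skew closure of `S`: the final set of blue vertices. -/
def skewClosure (G : SimpleGraph V) (S : Set V) : Set V := {v | SkewForced G S v}

/-- `S` is a skew forcing set if its skew closure is everything. -/
def IsSkewForcingSet (G : SimpleGraph V) (S : Set V) : Prop :=
  skewClosure G S = Set.univ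

/-- The skew forcing number: minimum cardinality of a skew forcing set. -/
noncomputable def skewForcingNumber (G : SimpleGraph V) : ℕ :=
  sInf {n | ∃ S : Set V, S.ncard = n ∧ IsSkewForcingSet G S}

/-- The set of vertices forced blue by the skew rule from the empty set. -/
def Bnull (G : SimpleGraph V) : Set V := skewClosure G ∅

/-- A graph is skew-nontrivial if the skew process begun at the empty set produces a
proper 2-coloring: every edge joins a forced and an unforced vertex, and every forced
vertex has an unforced neighbor. -/
def SkewNontrivial (G : SimpleGraph V) : Prop :=
  (∀ u v : V, G.Adj u v →
      (u ∈ Bnull G ∧ v ∉ Bnull G) ∨ (u ∉ Bnull G ∧ v ∈ Bnull G)) ∧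
  (∀ u ∈ Bnull G, ∃ v : V, G.Adj u v ∧ v ∉ Bnull G)


set_option linter.unusedSectionVars false
namespace SkewAux

variable {T : SimpleGraph V} [DecidableEq V]

private lemma unique_path (hT : T.IsTree) {z b : V} (p q : T.Walk z b)
    (hp : p.IsPath) (hq : q.IsPath) : p = q := by
  obtain ⟨r, -, hr⟩ := hT.existsUnique_path z b
  rw [hr p hp, hr q hq]

private lemma exists_path (hc : T.Connected) (u v : V) :
    ∃ p : T.Walk u v, p.IsPath ∧ p.length = T.dist u v := by
  obtain ⟨p, hp⟩ := hc.exists_walk_length_eq_dist u v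
  refine ⟨p.bypass, p.bypass_isPath, ?_⟩
  have h1 := p.length_bypass_le
  have h2 := SimpleGraph.dist_le p.bypass
  omega

private lemma not_mem_support {z a b : V} (p : T.Walk z a) (h : p.length < T.dist z b) :
    b ∉ p.support := by
  intro hb
  have h1 := SimpleGraph.dist_le (p.takeUntil b hb)
  have h2 := p.length_takeUntil_le hb
  omega

private lemma concat_isPath {z a b : V} {p : T.Walk z a} (hp : p.IsPath) (hab : T.Adj a b)
    (hb : b ∉ p.support) : (p.concat hab).IsPath := by
  rw [← Walk.isPath_reverse_iff, Walk.reverse_concat]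
  exact hp.reverse.cons (by simpa [Walk.support_reverse] using hb)

/-- In a tree, adjacent vertices are not equidistant from any vertex. -/
private lemma dist_ne (hT : T.IsTree) {a b : V} (z : V) (h : T.Adj a b) :
    T.dist z a ≠ T.dist z b := by
  intro he
  obtain ⟨p, hp, hpl⟩ := exists_path hT.isConnected z a
  obtain ⟨q, hq, hql⟩ := exists_path hT.isConnected z b
  have hb : b ∉ p.support := by
    intro hb
    have h1 := SimpleGraph.dist_le (p.takeUntil b hb)
    have h3 : (p.takeUntil b hb).length + (p.dropUntil b hb).length = p.length := by
      rw [← Walk.length_append, Walk.take_spec]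
    have h5 : (p.dropUntil b hb).length = 0 := by omega
    exact h.ne (Walk.eq_of_length_eq_zero h5).symm
  have hpq := unique_path hT (p.concat h) q (concat_isPath hp h hb) hq
  have hlen : (p.concat h).length = q.length := by rw [hpq]
  rw [Walk.length_concat] at hlen
  omega

/-- Adjacent vertices have distances (from any vertex) differing by exactly one. -/
private lemma step (hT : T.IsTree) {a b : V} (z : V) (h : T.Adj a b) :
    T.dist z b = T.dist z a + 1 ∨ T.dist z a = T.dist z b + 1 := by
  have hc := hT.isConnected
  have h1 : T.dist z b ≤ T.dist z a + 1 := by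
    have := hc.dist_triangle (u := z) (v := a) (w := b)
    rwa [SimpleGraph.dist_eq_one_iff_adj.mpr h] at this
  have h2 : T.dist z a ≤ T.dist z b + 1 := by
    have := hc.dist_triangle (u := z) (v := b) (w := a)
    rwa [SimpleGraph.dist_eq_one_iff_adj.mpr h.symm] at this
  have h3 := dist_ne hT z h
  omega

/-- Key geometric fact: if `z` is strictly closer to `a` than to its neighbor `b`,
then crossing from `b` to any other neighbor `c ≠ a` increases the distance. -/
private lemma cross (hT : T.IsTree) {z a b c : V} (hab : T.Adj a b) (hcb : T.Adj c b)
    (hne : c ≠ a) (hlt : T.dist z a < T.dist z b) : T.dist z b < T.dist z c := by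
  have s1 := step hT z hab
  have s2 := step hT z hcb
  have hdb : T.dist z b = T.dist z a + 1 := by omega
  by_contra hcon
  have hdc : T.dist z c = T.dist z a := by omega
  obtain ⟨p, hp, hpl⟩ := exists_path hT.isConnected z a
  obtain ⟨q, hq, hql⟩ := exists_path hT.isConnected z c
  have hbp : b ∉ p.support := not_mem_support p (by omega)
  have hbq : b ∉ q.support := not_mem_support q (by omega)
  have hpq := unique_path hT (p.concat hab) (q.concat hcb)
    (concat_isPath hp hab hbp) (concat_isPath hq hcb hbq)
  have hrev : (p.concat hab).reverse.getVert 1 = (q.concat hcb).reverse.getVert 1 := by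
    rw [hpq]
  rw [Walk.reverse_concat, Walk.reverse_concat, Walk.getVert_cons _ _ one_ne_zero,
    Walk.getVert_cons _ _ one_ne_zero, Nat.sub_self, Walk.getVert_zero, Walk.getVert_zero] at hrev
  exact hne hrev.symm

private lemma exists_adj_dist_pred (hc : T.Connected) {a b : V} (h : 1 ≤ T.dist a b) :
    ∃ w, T.Adj b w ∧ T.dist a w + 1 = T.dist a b := by
  obtain ⟨p, hp⟩ := hc.exists_walk_length_eq_dist b a
  cases p with
  | nil =>
    rw [SimpleGraph.dist_comm] at h
    simp at hp
    simp at h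
  | @cons _ w _ hadj q =>
    refine ⟨w, hadj, ?_⟩
    have h1 : T.dist a w ≤ q.length := by
      have := SimpleGraph.dist_le q.reverse
      rwa [Walk.length_reverse] at this
    have h2 : T.dist a b ≤ T.dist a w + 1 := by
      have := hc.dist_triangle (u := a) (v := w) (w := b)
      rwa [SimpleGraph.dist_eq_one_iff_adj.mpr hadj.symm] at this
    rw [Walk.length_cons, SimpleGraph.dist_comm (u := b) (v := a)] at hp
    omega

end SkewAux

section Main

variable {T : SimpleGraph V} [DecidableEq V] [Fintype V]

private lemma bnull_eq (hT : T.IsTree) {l0 : V}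
    (hleaf : ∀ v : V, (∃ y, T.neighborSet v = {y}) → Even (T.dist l0 v)) :
    Bnull T = {v | Odd (T.dist l0 v)} := by
  classical
  have hc := hT.isConnected
  have key : ∀ n : ℕ, ∀ u v : V, T.Adj u v → Odd (T.dist l0 v) →
      ({z : V | T.dist z u < T.dist z v}).ncard = n → SkewForced T ∅ v := by
    intro n
    induction n using Nat.strong_induction_on with
    | _ n ih =>
      intro u v huv hodd hcard
      refine SkewForced.force huv ?_
      intro w hw hwv
      have s1 := SkewAux.step hT l0 huv
      have s2 := SkewAux.step hT l0 hw
      have hwodd : Odd (T.dist l0 w) := by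
        rw [Nat.odd_iff] at hodd ⊢
        rcases s1 with s1 | s1 <;> rcases s2 with s2 | s2 <;> omega
      have hex : ∃ x, T.Adj w x ∧ x ≠ u := by
        by_contra hcon
        push_neg at hcon
        have hsing : T.neighborSet w = {u} :=
          Set.eq_singleton_iff_unique_mem.mpr ⟨hw.symm, fun y hy => hcon y hy⟩
        have := hleaf w ⟨u, hsing⟩
        rw [Nat.even_iff] at this
        rw [Nat.odd_iff] at hwodd
        omega
      obtain ⟨x, hwx, hxu⟩ := hex
      have hsubset : {z : V | T.dist z x < T.dist z w} ⊆ {z : V | T.dist z u < T.dist z v} := by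
        intro z hz
        have l1 : T.dist z w < T.dist z u :=
          SkewAux.cross hT hwx.symm hw (Ne.symm hxu) hz
        exact SkewAux.cross hT hw.symm huv.symm (Ne.symm hwv) l1
      have humem : u ∈ {z : V | T.dist z u < T.dist z v} := by
        simp only [Set.mem_setOf_eq, SimpleGraph.dist_self]
        rw [SimpleGraph.dist_eq_one_iff_adj.mpr huv]
        omega
      have hunot : u ∉ {z : V | T.dist z x < T.dist z w} := by
        simp only [Set.mem_setOf_eq]
        rw [SimpleGraph.dist_eq_one_iff_adj.mpr hw]
        intro hlt
        have : T.dist u x = 0 := by omega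
        exact hxu ((hc.dist_eq_zero_iff.mp this).symm)
      have hss : {z : V | T.dist z x < T.dist z w} ⊂ {z : V | T.dist z u < T.dist z v} :=
        Set.ssubset_iff_subset_ne.mpr ⟨hsubset, fun h => hunot (h ▸ humem)⟩
      have hlt := Set.ncard_lt_ncard hss (Set.toFinite _)
      exact ih _ (hcard ▸ hlt) x w hwx.symm hwodd rfl
  ext v
  constructor
  · intro hv
    have hv' : SkewForced T ∅ v := hv
    clear hv
    induction hv' with
    | mem h => exact absurd h (Set.notMem_empty _)
    | @force u v huv hall ih =>
      simp only [Set.mem_setOf_eq]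
      by_cases hex : ∃ w, T.Adj u w ∧ w ≠ v
      · obtain ⟨w, hw1, hw2⟩ := hex
        have hwodd := ih w hw1 hw2
        simp only [Set.mem_setOf_eq] at hwodd
        have s1 := SkewAux.step hT l0 huv
        have s2 := SkewAux.step hT l0 hw1
        rw [Nat.odd_iff] at hwodd ⊢
        rcases s1 with s1 | s1 <;> rcases s2 with s2 | s2 <;> omega
      · push_neg at hex
        have hsing : T.neighborSet u = {v} :=
          Set.eq_singleton_iff_unique_mem.mpr ⟨huv, fun y hy => hex y hy⟩
        have heven := hleaf u ⟨v, hsing⟩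
        have s1 := SkewAux.step hT l0 huv
        rw [Nat.even_iff] at heven
        rw [Nat.odd_iff]
        omega
  · intro hv
    simp only [Set.mem_setOf_eq] at hv
    have hpos : 1 ≤ T.dist l0 v := by
      rw [Nat.odd_iff] at hv; omega
    obtain ⟨w, hw, -⟩ := SkewAux.exists_adj_dist_pred hc hpos
    exact key _ w v hw.symm hv rfl

end Main

/-- A tree is skew-nontrivial iff every pair of leaves is at even distance. -/
theorem tree_skewNontrivial_iff_leaf_dists_even [Fintype V] (T : SimpleGraph V)
    (hT : T.IsTree) :
    SkewNontrivial T ↔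
      ∀ u v : V, (∃ x, T.neighborSet u = {x}) → (∃ y, T.neighborSet v = {y}) →
        Even (T.dist u v) := by
  classical
  have hc := hT.isConnected
  constructor
  · rintro ⟨h1, h2⟩ u v ⟨x, hx⟩ ⟨y, hy⟩
    have white : ∀ (a b : V), T.neighborSet a = {b} → a ∉ Bnull T := by
      intro a b hab ha
      have hadj : T.Adj a b := by
        rw [← SimpleGraph.mem_neighborSet, hab]; rfl
      have hb : b ∈ Bnull T :=
        SkewForced.force hadj (fun w hw hwb => by
          rw [← SimpleGraph.mem_neighborSet, hab] at hw
          exact absurd hw hwb)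
      obtain ⟨c, hc1, hc2⟩ := h2 a ha
      have hcb : c = b := by
        have : c ∈ T.neighborSet a := hc1
        rwa [hab] at this
      exact hc2 (hcb ▸ hb)
    have alt : ∀ (a b : V) (p : T.Walk a b),
        ((a ∈ Bnull T) ↔ (b ∈ Bnull T)) ↔ Even p.length := by
      intro a b p
      induction p with
      | nil => simp
      | cons h q ih =>
        have hx := h1 _ _ h
        rw [Walk.length_cons, Nat.even_add_one, ← ih]
        tauto
    obtain ⟨p, hplen⟩ := hc.exists_walk_length_eq_dist u v
    rw [← hplen, ← alt u v p]
    simp [white u x hx, white v y hy]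
  · intro hleaf
    by_cases hedge : ∃ a b : V, T.Adj a b
    · -- tree with at least one edge: find a leaf l0
      obtain ⟨a, b, hab⟩ := hedge
      haveI : Nonempty V := ⟨a⟩
      have hdeg1 : ∀ v : V, 0 < T.degree v := by
        intro v
        rw [SimpleGraph.degree_pos_iff_exists_adj]
        by_cases hva : v = a
        · subst hva; exact ⟨b, hab⟩
        · obtain ⟨p⟩ := hc.preconnected v a
          cases p with
          | nil => exact absurd rfl hva
          | @cons _ w _ h q => exact ⟨w, h⟩
      have hsum := T.sum_degrees_eq_twice_card_edges
      have hcardE := hT.card_edgeFinset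
      have hVpos : 1 ≤ Fintype.card V := Fintype.card_pos
      have hleafex : ∃ v : V, T.degree v = 1 := by
        by_contra hcon
        push_neg at hcon
        have hge : ∀ v : V, 2 ≤ T.degree v := by
          intro v
          have h1 := hdeg1 v
          have h2 := hcon v
          omega
        have hsum2 : 2 * Fintype.card V ≤ ∑ v, T.degree v := by
          calc 2 * Fintype.card V = ∑ _v : V, 2 := by
                rw [Finset.sum_const, Finset.card_univ, smul_eq_mul, mul_comm]
            _ ≤ ∑ v, T.degree v := Finset.sum_le_sum fun v _ => hge v
        omega
      obtain ⟨l0, hl0deg⟩ := hleafex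
      obtain ⟨x0, hx0⟩ := Finset.card_eq_one.mp hl0deg
      have hl0 : T.neighborSet l0 = {x0} := by
        ext y
        rw [SimpleGraph.mem_neighborSet, ← SimpleGraph.mem_neighborFinset, hx0]
        simp
      have hleaf' : ∀ v : V, (∃ y, T.neighborSet v = {y}) → Even (T.dist l0 v) :=
        fun v hv => hleaf l0 v ⟨x0, hl0⟩ hv
      have hBO := bnull_eq hT hleaf'
      constructor
      · intro u v huv
        have s := SkewAux.step hT l0 huv
        rw [hBO]
        simp only [Set.mem_setOf_eq, Nat.odd_iff]
        rcases s with s | s <;> omega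
      · intro u hu
        rw [hBO] at hu
        simp only [Set.mem_setOf_eq, Nat.odd_iff] at hu
        have hpos : 1 ≤ T.dist l0 u := by omega
        obtain ⟨w, hw, hdw⟩ := SkewAux.exists_adj_dist_pred hc hpos
        refine ⟨w, hw, ?_⟩
        rw [hBO]
        simp only [Set.mem_setOf_eq, Nat.odd_iff]
        omega
    · -- no edges
      push_neg at hedge
      have hB : Bnull T = ∅ := by
        ext v
        simp only [Set.mem_empty_iff_false, iff_false]
        intro hv
        have hv' : SkewForced T ∅ v := hv
        cases hv' with
        | mem h => exact absurd h (Set.notMem_empty _)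
        | force huv hall => exact hedge _ _ huv
      constructor
      · intro u v huv
        exact absurd huv (hedge u v)
      · intro u hu
        rw [hB] at hu
        exact absurd hu (Set.notMem_empty _)
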